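/- An element f of the commutator ideal F_2' is fixed by the automorphism of F_2 exchanging x_1 and x_2 if and only if there exists a symmetric polynomial q ∈ K[x_1,x_2] such that f = L(q)·(x_2 − x_1)·[x_2,x_1]. Equivalently, the invariants of S_2 in F_2' form the left K[x_1,x_2]^{S_2}-module generated by the single element (x_2 − x_1)[x_2,x_1]. -/

import Mathlib

/-- The Grassmann relation on the free algebra on two generators. -/
def GrassRel2 (K : Type*) [Field K] (x y : FreeAlgebra K (Fin 2)) : Prop :=
  ∃ a b c : FreeAlgebra K (Fin 2), x = (a * b - b * a) * c - c * (a * b - b * a) ∧ y = 0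

/-- The relatively free algebra of rank 2 in the variety generated by Grassmann algebras. -/
abbrev F2 (K : Type*) [Field K] := RingQuot (GrassRel2 K)

/-- The generators of `F2`. -/
noncomputable def X2 (K : Type*) [Field K] (i : Fin 2) : F2 K :=
  RingQuot.mkAlgHom K (GrassRel2 K) (FreeAlgebra.ι K i)

/-- The commutator ideal of `F2`: the two-sided ideal generated by all commutators. -/
noncomputable def commIdeal2 (K : Type*) [Field K] : TwoSidedIdeal (F2 K) :=
  TwoSidedIdeal.span {x | ∃ u v : F2 K, x = u * v - v * u}

/-- The `K`-linear substitution map `K[x₁,x₂] → F2` sending each monomial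
`x₁^a x₂^b` to the ordered product `x₁^a x₂^b` in `F2`. -/
noncomputable def L2 (K : Type*) [Field K] (p : MvPolynomial (Fin 2) K) : F2 K :=
  p.support.sum fun m => p.coeff m • (X2 K 0 ^ m 0 * X2 K 1 ^ m 1)

/-- `F2` satisfies the Grassmann identity. -/
theorem F2_grassmann (K : Type*) [Field K] (A B C : F2 K) :
    (A * B - B * A) * C - C * (A * B - B * A) = 0 := by
  obtain ⟨a, rfl⟩ := RingQuot.mkAlgHom_surjective K (GrassRel2 K) A
  obtain ⟨b, rfl⟩ := RingQuot.mkAlgHom_surjective K (GrassRel2 K) B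
  obtain ⟨c, rfl⟩ := RingQuot.mkAlgHom_surjective K (GrassRel2 K) C
  rw [← map_mul, ← map_mul, ← map_sub, ← map_mul, ← map_mul, ← map_sub]
  have : RingQuot.mkAlgHom K (GrassRel2 K) ((a * b - b * a) * c - c * (a * b - b * a)) =
      RingQuot.mkAlgHom K (GrassRel2 K) 0 :=
    RingQuot.mkAlgHom_rel K ⟨a, b, c, rfl, rfl⟩
  simpa using this

/-- The algebra automorphism of `F2` exchanging the two generators. -/
noncomputable def swapAut2 (K : Type*) [Field K] : F2 K →ₐ[K] F2 K :=
  RingQuot.liftAlgHom K ⟨FreeAlgebra.lift K fun i => X2 K (Equiv.swap 0 1 i), by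
    rintro x y ⟨a, b, c, rfl, rfl⟩
    simp only [map_sub, map_mul, map_zero]
    exact F2_grassmann K _ _ _⟩



noncomputable section
namespace GrassAux
open MvPolynomial

variable (K : Type*) [Field K]

structure Model where
  fst : MvPolynomial (Fin 2) K
  snd : MvPolynomial (Fin 2) K

namespace Model
variable {K}

@[ext] lemma ext' {a b : Model K} (h1 : a.fst = b.fst) (h2 : a.snd = b.snd) : a = b := by
  cases a; cases b; simp_all

instance : Add (Model K) := ⟨fun a b => ⟨a.1 + b.1, a.2 + b.2⟩⟩
instance : Zero (Model K) := ⟨⟨0, 0⟩⟩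
instance : Neg (Model K) := ⟨fun a => ⟨-a.1, -a.2⟩⟩
instance : SMul K (Model K) := ⟨fun k a => ⟨k • a.1, k • a.2⟩⟩
instance : Mul (Model K) :=
  ⟨fun a b => ⟨a.1 * b.1, a.1 * b.2 + a.2 * b.1 - pderiv 1 a.1 * pderiv 0 b.1⟩⟩
instance : One (Model K) := ⟨⟨1, 0⟩⟩

@[simp] lemma add_fst (a b : Model K) : (a + b).fst = a.fst + b.fst := rfl
@[simp] lemma add_snd (a b : Model K) : (a + b).snd = a.snd + b.snd := rfl
@[simp] lemma zero_fst : (0 : Model K).fst = 0 := rfl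
@[simp] lemma zero_snd : (0 : Model K).snd = 0 := rfl
@[simp] lemma neg_fst (a : Model K) : (-a).fst = -a.fst := rfl
@[simp] lemma neg_snd (a : Model K) : (-a).snd = -a.snd := rfl
@[simp] lemma smul_fst (k : K) (a : Model K) : (k • a).fst = k • a.fst := rfl
@[simp] lemma smul_snd (k : K) (a : Model K) : (k • a).snd = k • a.snd := rfl
@[simp] lemma mul_fst (a b : Model K) : (a * b).fst = a.fst * b.fst := rfl
@[simp] lemma mul_snd (a b : Model K) :
    (a * b).snd = a.fst * b.snd + a.snd * b.fst - pderiv 1 a.fst * pderiv 0 b.fst := rfl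
@[simp] lemma one_fst : (1 : Model K).fst = 1 := rfl
@[simp] lemma one_snd : (1 : Model K).snd = 0 := rfl

instance : AddCommGroup (Model K) where
  add_assoc a b c := by refine ext' ?_ ?_ <;> simp [add_assoc]
  zero_add a := by refine ext' ?_ ?_ <;> simp
  add_zero a := by refine ext' ?_ ?_ <;> simp
  add_comm a b := by refine ext' ?_ ?_ <;> simp [add_comm]
  neg_add_cancel a := by refine ext' ?_ ?_ <;> simp
  nsmul := nsmulRec
  zsmul := zsmulRec

@[simp] lemma sub_fst (a b : Model K) : (a - b).fst = a.fst - b.fst := by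
  rw [sub_eq_add_neg, sub_eq_add_neg]; simp
@[simp] lemma sub_snd (a b : Model K) : (a - b).snd = a.snd - b.snd := by
  rw [sub_eq_add_neg, sub_eq_add_neg]; simp

instance : Module K (Model K) where
  one_smul a := by refine ext' ?_ ?_ <;> simp
  mul_smul k l a := by refine ext' ?_ ?_ <;> simp [mul_smul]
  smul_zero k := by refine ext' ?_ ?_ <;> simp
  smul_add k a b := by refine ext' ?_ ?_ <;> simp
  add_smul k l a := by refine ext' ?_ ?_ <;> simp [add_smul]
  zero_smul a := by refine ext' ?_ ?_ <;> simp

instance : Ring (Model K) :=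
  { (inferInstance : AddCommGroup (Model K)) with
    mul := (· * ·)
    one := (1 : Model K)
    left_distrib := fun a b c => by refine ext' ?_ ?_ <;> simp [map_add, mul_add] <;> ring
    right_distrib := fun a b c => by refine ext' ?_ ?_ <;> simp [map_add, add_mul] <;> ring
    zero_mul := fun a => by refine ext' ?_ ?_ <;> simp
    mul_zero := fun a => by refine ext' ?_ ?_ <;> simp
    mul_assoc := fun a b c => by
      refine ext' ?_ ?_ <;> simp [map_add, map_sub, pderiv_mul, mul_assoc] <;> ring
    one_mul := fun a => by refine ext' ?_ ?_ <;> simp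
    mul_one := fun a => by refine ext' ?_ ?_ <;> simp }

instance : Algebra K (Model K) :=
  Algebra.ofModule
    (fun k a b => by
      refine ext' ?_ ?_ <;> simp [map_smul, smul_sub, smul_add, smul_mul_assoc, mul_smul_comm])
    (fun k a b => by
      refine ext' ?_ ?_ <;> simp [map_smul, smul_sub, smul_add, smul_mul_assoc, mul_smul_comm])

lemma grassModel (a b c : Model K) :
    (a * b - b * a) * c - c * (a * b - b * a) = 0 := by
  refine ext' ?_ ?_ <;> simp [map_add, map_sub, pderiv_mul, mul_sub, sub_mul] <;> ring

end Model
end GrassAux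
noncomputable section F2side
namespace GrassAux
open MvPolynomial

variable (K : Type*) [Field K]

/-- The commutator `[x₁,x₂]` in `F2`. -/
def zc : F2 K := X2 K 0 * X2 K 1 - X2 K 1 * X2 K 0

/-- The commutator `[x₂,x₁]` in `F2`. -/
def zc2 : F2 K := X2 K 1 * X2 K 0 - X2 K 0 * X2 K 1

variable {K}

lemma zc_comm (c : F2 K) : zc K * c = c * zc K := by
  have h := F2_grassmann K (X2 K 0) (X2 K 1) c
  rw [sub_eq_zero] at h
  exact h

lemma zc2_comm (c : F2 K) : zc2 K * c = c * zc2 K := by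
  have h := F2_grassmann K (X2 K 1) (X2 K 0) c
  rw [sub_eq_zero] at h
  exact h

lemma zc2_add_zc : zc2 K + zc K = 0 := by unfold zc zc2; abel

lemma zc_sq [CharZero K] : zc K * zc K = 0 := by
  have e1 : X2 K 0 * (X2 K 1 * zc K) - (X2 K 1 * zc K) * X2 K 0 = zc K * zc K := by
    have h1 : (X2 K 1 * zc K) * X2 K 0 = (X2 K 1 * X2 K 0) * zc K := by
      rw [mul_assoc, zc_comm (X2 K 0), ← mul_assoc]
    have h2 : X2 K 0 * (X2 K 1 * zc K) = (X2 K 0 * X2 K 1) * zc K := by rw [← mul_assoc]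
    rw [h1, h2, ← sub_mul]
    rfl
  have hxy : X2 K 0 * X2 K 1 = X2 K 1 * X2 K 0 + zc K := by unfold zc; abel
  have hw : X2 K 0 * (X2 K 1 * X2 K 1) - (X2 K 1 * X2 K 1) * X2 K 0 =
      X2 K 1 * zc K + X2 K 1 * zc K := by
    have c1 : X2 K 0 * (X2 K 1 * X2 K 1) =
        (X2 K 1 * X2 K 1) * X2 K 0 + X2 K 1 * zc K + X2 K 1 * zc K := by
      calc X2 K 0 * (X2 K 1 * X2 K 1) = (X2 K 0 * X2 K 1) * X2 K 1 := by rw [← mul_assoc]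
        _ = (X2 K 1 * X2 K 0) * X2 K 1 + zc K * X2 K 1 := by rw [hxy, add_mul]
        _ = X2 K 1 * (X2 K 0 * X2 K 1) + zc K * X2 K 1 := by rw [mul_assoc]
        _ = X2 K 1 * (X2 K 1 * X2 K 0) + X2 K 1 * zc K + zc K * X2 K 1 := by
            rw [hxy, mul_add, add_assoc]
        _ = (X2 K 1 * X2 K 1) * X2 K 0 + X2 K 1 * zc K + X2 K 1 * zc K := by
            rw [← mul_assoc, zc_comm (X2 K 1)]
    rw [c1]; abel
  have g2 := F2_grassmann K (X2 K 0) (X2 K 1 * X2 K 1) (X2 K 0)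
  rw [hw] at g2
  have hsx := sub_eq_zero.mp g2
  have e2 : zc K * zc K + zc K * zc K =
      X2 K 0 * (X2 K 1 * zc K + X2 K 1 * zc K) - (X2 K 1 * zc K + X2 K 1 * zc K) * X2 K 0 := by
    rw [mul_add, add_mul, ← e1]; abel
  have key : zc K * zc K + zc K * zc K = 0 := by
    rw [e2, ← hsx, sub_self]
  have h2 : (2 : K) • (zc K * zc K) = 0 := by rw [two_smul]; exact key
  rcases smul_eq_zero.mp h2 with h | h
  · exact absurd h (by norm_num)
  · exact h

lemma zc2_mul_zc [CharZero K] : zc2 K * zc K = 0 := by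
  have h : zc2 K * zc K = (zc2 K + zc K) * zc K - zc K * zc K := by
    rw [add_mul]; abel
  rw [h, zc2_add_zc, zero_mul, zc_sq, sub_self]

lemma zc_mul_zc2 [CharZero K] : zc K * zc2 K = 0 := by
  have h : zc K * zc2 K = zc K * (zc2 K + zc K) - zc K * zc K := by
    rw [mul_add]; abel
  rw [h, zc2_add_zc, mul_zero, zc_sq, sub_self]

lemma zc2_sq [CharZero K] : zc2 K * zc2 K = 0 := by
  have h : zc2 K * zc2 K = zc2 K * (zc2 K + zc K) - zc2 K * zc K := by
    rw [mul_add]; abel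
  rw [h, zc2_add_zc, mul_zero, zc2_mul_zc, sub_self]

lemma pow_reorder {u v w : F2 K} (hw : ∀ c, w * c = c * w) (h : v * u = u * v - w) (n : ℕ) :
    v ^ (n + 1) * u = u * v ^ (n + 1) - (n + 1) • (v ^ n * w) := by
  induction n with
  | zero => simpa using h
  | succ k ih =>
    calc v ^ (k + 1 + 1) * u = v ^ (k + 1) * (v * u) := by rw [pow_succ v (k + 1), mul_assoc]
      _ = v ^ (k + 1) * (u * v) - v ^ (k + 1) * w := by rw [h, mul_sub]
      _ = (v ^ (k + 1) * u) * v - v ^ (k + 1) * w := by rw [← mul_assoc]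
      _ = (u * v ^ (k + 1) - (k + 1) • (v ^ k * w)) * v - v ^ (k + 1) * w := by rw [ih]
      _ = u * (v ^ (k + 1) * v) - (k + 1) • (v ^ k * (w * v)) - v ^ (k + 1) * w := by
          rw [sub_mul, smul_mul_assoc, mul_assoc, mul_assoc]
      _ = u * v ^ (k + 1 + 1) - ((k + 1) • (v ^ (k + 1) * w) + v ^ (k + 1) * w) := by
          rw [hw v, ← pow_succ, ← mul_assoc, ← pow_succ, sub_sub]
      _ = u * v ^ (k + 1 + 1) - (k + 1 + 1) • (v ^ (k + 1) * w) := by rw [← succ_nsmul]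

lemma ypow_mul_x (b : ℕ) :
    X2 K 1 ^ (b + 1) * X2 K 0 = X2 K 0 * X2 K 1 ^ (b + 1) - (b + 1) • (X2 K 1 ^ b * zc K) := by
  have h : X2 K 1 * X2 K 0 = X2 K 0 * X2 K 1 - zc K := by unfold zc; abel
  exact pow_reorder zc_comm h b

lemma xpow_mul_y (a : ℕ) :
    X2 K 0 ^ (a + 1) * X2 K 1 = X2 K 1 * X2 K 0 ^ (a + 1) - (a + 1) • (X2 K 0 ^ a * zc2 K) := by
  have h : X2 K 0 * X2 K 1 = X2 K 1 * X2 K 0 - zc2 K := by unfold zc2; abel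
  exact pow_reorder zc2_comm h a

lemma y_mul_xpow (a : ℕ) :
    X2 K 1 * X2 K 0 ^ (a + 1) = X2 K 0 ^ (a + 1) * X2 K 1 + (a + 1) • (X2 K 0 ^ a * zc2 K) := by
  rw [xpow_mul_y a]; abel

variable (K)

/-- Ordered monomial in `F2`. -/
def mono2 (a b : ℕ) : F2 K := X2 K 0 ^ a * X2 K 1 ^ b

variable {K}

lemma L2_def (p : MvPolynomial (Fin 2) K) :
    L2 K p = ∑ m ∈ p.support, coeff m p • mono2 K (m 0) (m 1) := rfl

lemma L2_eq_sum {p : MvPolynomial (Fin 2) K} {s : Finset (Fin 2 →₀ ℕ)}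
    (h : p.support ⊆ s) :
    L2 K p = ∑ m ∈ s, coeff m p • mono2 K (m 0) (m 1) := by
  rw [L2_def]
  exact Finset.sum_subset h fun m _ hm => by
    rw [notMem_support_iff.mp hm, zero_smul]

lemma L2_zero : L2 K (0 : MvPolynomial (Fin 2) K) = 0 := by
  rw [L2_def]; simp

lemma L2_add (p q : MvPolynomial (Fin 2) K) : L2 K (p + q) = L2 K p + L2 K q := by
  classical
  rw [L2_eq_sum (s := p.support ∪ q.support) support_add,
    L2_eq_sum (s := p.support ∪ q.support) Finset.subset_union_left,
    L2_eq_sum (s := p.support ∪ q.support) Finset.subset_union_right,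
    ← Finset.sum_add_distrib]
  exact Finset.sum_congr rfl fun m _ => by rw [coeff_add, add_smul]

lemma L2_smul (k : K) (p : MvPolynomial (Fin 2) K) : L2 K (k • p) = k • L2 K p := by
  rw [L2_eq_sum (s := p.support) support_smul, L2_def, Finset.smul_sum]
  exact Finset.sum_congr rfl fun m _ => by
    rw [coeff_smul, smul_eq_mul, mul_smul]

lemma L2_sub (p q : MvPolynomial (Fin 2) K) : L2 K (p - q) = L2 K p - L2 K q := by
  have h : p - q + q = p := by abel
  have h2 := L2_add (p - q) q
  rw [h] at h2
  rw [h2]; abel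

lemma L2_monomial (m : Fin 2 →₀ ℕ) (c : K) :
    L2 K (monomial m c) = c • mono2 K (m 0) (m 1) := by
  classical
  rcases eq_or_ne c 0 with rfl | hc
  · simp [L2_def]
  · rw [L2_eq_sum (s := {m}) support_monomial_subset, Finset.sum_singleton,
      coeff_monomial, if_pos rfl]

lemma L2_one : L2 K (1 : MvPolynomial (Fin 2) K) = 1 := by
  have h1 : (1 : MvPolynomial (Fin 2) K) = monomial 0 1 := by
    rw [← C_1, C_apply]
  rw [h1, L2_monomial]
  simp [mono2]

lemma single_add_single (m : Fin 2 →₀ ℕ) :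
    Finsupp.single 0 (m 0) + Finsupp.single 1 (m 1) = m := by
  ext i
  fin_cases i <;> simp [Finsupp.single_apply]

lemma monomial_eq_mono (m : Fin 2 →₀ ℕ) (c : K) :
    monomial m c = c • (X 0 ^ m 0 * X 1 ^ m 1 : MvPolynomial (Fin 2) K) := by
  rw [X_pow_eq_monomial, X_pow_eq_monomial, monomial_mul, one_mul, smul_monomial,
    smul_eq_mul, mul_one, single_add_single]

end GrassAux
end F2side
noncomputable section F3
namespace GrassAux
open MvPolynomial

variable {K : Type*} [Field K]

lemma x_mul_mono2 (a b : ℕ) : X2 K 0 * mono2 K a b = mono2 K (a + 1) b := by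
  unfold mono2
  rw [← mul_assoc, ← pow_succ']

lemma mono2_mul_y (a b : ℕ) : mono2 K a b * X2 K 1 = mono2 K a (b + 1) := by
  unfold mono2
  rw [mul_assoc, ← pow_succ]

lemma y_mul_mono2 (a b : ℕ) :
    X2 K 1 * mono2 K a b = mono2 K a (b + 1) + a • (mono2 K (a - 1) b * zc2 K) := by
  unfold mono2
  cases a with
  | zero => simp [pow_succ']
  | succ n =>
    rw [Nat.add_sub_cancel]
    calc X2 K 1 * (X2 K 0 ^ (n + 1) * X2 K 1 ^ b)
        = (X2 K 1 * X2 K 0 ^ (n + 1)) * X2 K 1 ^ b := by rw [mul_assoc]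
      _ = (X2 K 0 ^ (n + 1) * X2 K 1 + (n + 1) • (X2 K 0 ^ n * zc2 K)) * X2 K 1 ^ b := by
          rw [y_mul_xpow n]
      _ = X2 K 0 ^ (n + 1) * (X2 K 1 * X2 K 1 ^ b) +
            (n + 1) • (X2 K 0 ^ n * (zc2 K * X2 K 1 ^ b)) := by
          rw [add_mul, smul_mul_assoc, mul_assoc, mul_assoc]
      _ = X2 K 0 ^ (n + 1) * X2 K 1 ^ (b + 1) + (n + 1) • (X2 K 0 ^ n * X2 K 1 ^ b * zc2 K) := by
          rw [← pow_succ', zc2_comm, ← mul_assoc]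

lemma mono2_mul_x (a b : ℕ) :
    mono2 K a b * X2 K 0 = mono2 K (a + 1) b - b • (mono2 K a (b - 1) * zc K) := by
  unfold mono2
  cases b with
  | zero => simp [pow_succ]
  | succ n =>
    rw [Nat.add_sub_cancel]
    calc (X2 K 0 ^ a * X2 K 1 ^ (n + 1)) * X2 K 0
        = X2 K 0 ^ a * (X2 K 1 ^ (n + 1) * X2 K 0) := by rw [mul_assoc]
      _ = X2 K 0 ^ a * (X2 K 0 * X2 K 1 ^ (n + 1)) -
            (n + 1) • (X2 K 0 ^ a * (X2 K 1 ^ n * zc K)) := by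
          rw [ypow_mul_x n, mul_sub, mul_smul_comm]
      _ = (X2 K 0 ^ a * X2 K 0) * X2 K 1 ^ (n + 1) -
            (n + 1) • ((X2 K 0 ^ a * X2 K 1 ^ n) * zc K) := by
          rw [← mul_assoc, ← mul_assoc]
      _ = X2 K 0 ^ (a + 1) * X2 K 1 ^ (n + 1) - (n + 1) • (X2 K 0 ^ a * X2 K 1 ^ n * zc K) := by
          rw [← pow_succ]

lemma X_mul_monomial' (i : Fin 2) (m : Fin 2 →₀ ℕ) (c : K) :
    (X i : MvPolynomial (Fin 2) K) * monomial m c = monomial (m + Finsupp.single i 1) c := by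
  rw [mul_comm,
    show (X i : MvPolynomial (Fin 2) K) = monomial (Finsupp.single i 1) 1 by
      rw [← pow_one (X i : MvPolynomial (Fin 2) K), X_pow_eq_monomial],
    monomial_mul, mul_one]

lemma L2_mul_x (p : MvPolynomial (Fin 2) K) :
    L2 K p * X2 K 0 = L2 K (X 0 * p) - L2 K (pderiv 1 p) * zc K := by
  induction p using MvPolynomial.induction_on' with
  | add p q hp hq =>
    rw [L2_add, add_mul, hp, hq, mul_add, L2_add, map_add, L2_add, add_mul]
    abel
  | monomial m c =>
    rw [L2_monomial, smul_mul_assoc, mono2_mul_x, X_mul_monomial', L2_monomial,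
      pderiv_monomial, L2_monomial]
    have e0 : (m + Finsupp.single 0 1 : Fin 2 →₀ ℕ) 0 = m 0 + 1 := by simp
    have e1 : (m + Finsupp.single 0 1 : Fin 2 →₀ ℕ) 1 = m 1 := by
      simp [Finsupp.single_apply]
    have e2 : (m - Finsupp.single 1 1 : Fin 2 →₀ ℕ) 0 = m 0 := by
      simp [Finsupp.tsub_apply, Finsupp.single_apply]
    have e3 : (m - Finsupp.single 1 1 : Fin 2 →₀ ℕ) 1 = m 1 - 1 := by
      simp [Finsupp.tsub_apply]
    rw [e0, e1, e2, e3, smul_sub]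
    congr 1
    rw [mul_smul, Nat.cast_smul_eq_nsmul, smul_mul_assoc, smul_mul_assoc]

lemma L2_mul_y (p : MvPolynomial (Fin 2) K) :
    L2 K p * X2 K 1 = L2 K (X 1 * p) := by
  induction p using MvPolynomial.induction_on' with
  | add p q hp hq => rw [L2_add, add_mul, hp, hq, mul_add, L2_add]
  | monomial m c =>
    rw [L2_monomial, smul_mul_assoc, mono2_mul_y, X_mul_monomial', L2_monomial]
    have e0 : (m + Finsupp.single 1 1 : Fin 2 →₀ ℕ) 0 = m 0 := by
      simp [Finsupp.single_apply]
    have e1 : (m + Finsupp.single 1 1 : Fin 2 →₀ ℕ) 1 = m 1 + 1 := by simp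
    rw [e0, e1]

lemma x_mul_L2 (p : MvPolynomial (Fin 2) K) :
    X2 K 0 * L2 K p = L2 K (X 0 * p) := by
  induction p using MvPolynomial.induction_on' with
  | add p q hp hq => rw [L2_add, mul_add, hp, hq, mul_add, L2_add]
  | monomial m c =>
    rw [L2_monomial, mul_smul_comm, x_mul_mono2, X_mul_monomial', L2_monomial]
    have e0 : (m + Finsupp.single 0 1 : Fin 2 →₀ ℕ) 0 = m 0 + 1 := by simp
    have e1 : (m + Finsupp.single 0 1 : Fin 2 →₀ ℕ) 1 = m 1 := by
      simp [Finsupp.single_apply]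
    rw [e0, e1]

lemma y_mul_L2 (p : MvPolynomial (Fin 2) K) :
    X2 K 1 * L2 K p = L2 K (X 1 * p) + L2 K (pderiv 0 p) * zc2 K := by
  induction p using MvPolynomial.induction_on' with
  | add p q hp hq =>
    rw [L2_add, mul_add, hp, hq, mul_add, L2_add, map_add, L2_add, add_mul]
    abel
  | monomial m c =>
    rw [L2_monomial, mul_smul_comm, y_mul_mono2, X_mul_monomial', L2_monomial,
      pderiv_monomial, L2_monomial]
    have e0 : (m + Finsupp.single 1 1 : Fin 2 →₀ ℕ) 0 = m 0 := by
      simp [Finsupp.single_apply]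
    have e1 : (m + Finsupp.single 1 1 : Fin 2 →₀ ℕ) 1 = m 1 + 1 := by simp
    have e2 : (m - Finsupp.single 0 1 : Fin 2 →₀ ℕ) 0 = m 0 - 1 := by
      simp [Finsupp.tsub_apply]
    have e3 : (m - Finsupp.single 0 1 : Fin 2 →₀ ℕ) 1 = m 1 := by
      simp [Finsupp.tsub_apply, Finsupp.single_apply]
    rw [e0, e1, e2, e3, smul_add]
    congr 1
    rw [mul_smul, Nat.cast_smul_eq_nsmul, smul_mul_assoc, smul_mul_assoc]

end GrassAux
end F3
noncomputable section F4
namespace GrassAux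
open MvPolynomial

variable (K : Type*) [Field K]

/-- The algebra map from `F2` to the model. -/
def phi : F2 K →ₐ[K] Model K :=
  RingQuot.liftAlgHom K ⟨FreeAlgebra.lift K fun i => ⟨X i, 0⟩, by
    rintro a b ⟨u, v, w, rfl, rfl⟩
    simp only [map_sub, map_mul, map_zero]
    exact Model.grassModel _ _ _⟩

/-- First component as an additive map. -/
def fstH : Model K →+ MvPolynomial (Fin 2) K :=
  { toFun := Model.fst, map_zero' := rfl, map_add' := fun _ _ => rfl }

/-- Second component as an additive map. -/
def sndH : Model K →+ MvPolynomial (Fin 2) K :=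
  { toFun := Model.snd, map_zero' := rfl, map_add' := fun _ _ => rfl }

variable {K}

lemma phi_X2 (i : Fin 2) : phi K (X2 K i) = ⟨X i, 0⟩ := by
  unfold phi X2
  rw [RingQuot.liftAlgHom_mkAlgHom_apply, FreeAlgebra.lift_ι_apply]

lemma pderiv_one_xpow (a : ℕ) : pderiv 1 ((X 0 : MvPolynomial (Fin 2) K) ^ a) = 0 := by
  rw [X_pow_eq_monomial, pderiv_monomial]
  simp [Finsupp.single_apply]

lemma pderiv_zero_ypow (b : ℕ) : pderiv 0 ((X 1 : MvPolynomial (Fin 2) K) ^ b) = 0 := by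
  rw [X_pow_eq_monomial, pderiv_monomial]
  simp [Finsupp.single_apply]

lemma model_xpow (a : ℕ) : (⟨X 0, 0⟩ : Model K) ^ a = ⟨X 0 ^ a, 0⟩ := by
  induction a with
  | zero => rfl
  | succ n ih =>
    rw [pow_succ, ih]
    refine Model.ext' ?_ ?_
    · simp [← pow_succ]
    · simp [pderiv_one_xpow]

lemma model_ypow (b : ℕ) : (⟨X 1, 0⟩ : Model K) ^ b = ⟨X 1 ^ b, 0⟩ := by
  induction b with
  | zero => rfl
  | succ n ih =>
    rw [pow_succ, ih]
    refine Model.ext' ?_ ?_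
    · simp [← pow_succ]
    · simp [pderiv_zero_ypow]

lemma phi_mono2 (a b : ℕ) : phi K (mono2 K a b) = ⟨X 0 ^ a * X 1 ^ b, 0⟩ := by
  unfold mono2
  rw [map_mul, map_pow, map_pow, phi_X2, phi_X2, model_xpow, model_ypow]
  refine Model.ext' ?_ ?_
  · simp
  · simp [pderiv_one_xpow, pderiv_zero_ypow]

lemma phi_L2 (p : MvPolynomial (Fin 2) K) : phi K (L2 K p) = ⟨p, 0⟩ := by
  rw [L2_def, map_sum]
  have hterm : ∀ m ∈ p.support,
      phi K (coeff m p • mono2 K (m 0) (m 1)) = ⟨monomial m (coeff m p), 0⟩ := by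
    intro m _
    rw [map_smul, phi_mono2]
    refine Model.ext' ?_ ?_
    · rw [Model.smul_fst]
      exact (monomial_eq_mono m (coeff m p)).symm
    · simp
  rw [Finset.sum_congr rfl hterm]
  refine Model.ext' ?_ ?_
  · have : (∑ m ∈ p.support, (⟨monomial m (coeff m p), 0⟩ : Model K)).fst
        = fstH K (∑ m ∈ p.support, (⟨monomial m (coeff m p), 0⟩ : Model K)) := rfl
    rw [this, map_sum]
    exact support_sum_monomial_coeff p
  · have : (∑ m ∈ p.support, (⟨monomial m (coeff m p), 0⟩ : Model K)).snd
        = sndH K (∑ m ∈ p.support, (⟨monomial m (coeff m p), 0⟩ : Model K)) := rfl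
    rw [this, map_sum]
    simp [sndH]

lemma phi_zc : phi K (zc K) = ⟨0, 1⟩ := by
  unfold zc
  rw [map_sub, map_mul, map_mul, phi_X2, phi_X2]
  refine Model.ext' ?_ ?_
  · simp [mul_comm]
  · simp [pderiv_X_self, pderiv_X_of_ne (show (0:Fin 2) ≠ 1 by decide),
      pderiv_X_of_ne (show (1:Fin 2) ≠ 0 by decide)]

lemma phi_zc2 : phi K (zc2 K) = ⟨0, -1⟩ := by
  unfold zc2
  rw [map_sub, map_mul, map_mul, phi_X2, phi_X2]
  refine Model.ext' ?_ ?_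
  · simp [mul_comm]
  · simp [pderiv_X_self, pderiv_X_of_ne (show (0:Fin 2) ≠ 1 by decide),
      pderiv_X_of_ne (show (1:Fin 2) ≠ 0 by decide)]

lemma phi_L2_mul_zc (t : MvPolynomial (Fin 2) K) : phi K (L2 K t * zc K) = ⟨0, t⟩ := by
  rw [map_mul, phi_L2, phi_zc]
  refine Model.ext' ?_ ?_ <;> simp

lemma phi_L2_mul_zc2 (t : MvPolynomial (Fin 2) K) : phi K (L2 K t * zc2 K) = ⟨0, -t⟩ := by
  rw [map_mul, phi_L2, phi_zc2]
  refine Model.ext' ?_ ?_ <;> simp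

lemma span_all [CharZero K] (f : F2 K) : ∃ p m, f = L2 K p + L2 K m * zc2 K := by
  obtain ⟨w, rfl⟩ := RingQuot.mkAlgHom_surjective K (GrassRel2 K) f
  have base : ∃ p m, (1 : F2 K) = L2 K p + L2 K m * zc2 K :=
    ⟨1, 0, by rw [L2_one, L2_zero, zero_mul, add_zero]⟩
  have main : ∀ w : FreeAlgebra K (Fin 2), ∀ g : F2 K,
      (∃ p m, g = L2 K p + L2 K m * zc2 K) →
      ∃ p m, RingQuot.mkAlgHom K (GrassRel2 K) w * g = L2 K p + L2 K m * zc2 K := by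
    intro w
    induction w using FreeAlgebra.induction with
    | grade0 k =>
      rintro g ⟨p, m, rfl⟩
      refine ⟨k • p, k • m, ?_⟩
      rw [AlgHom.commutes, ← Algebra.smul_def, smul_add, L2_smul, L2_smul, smul_mul_assoc]
    | grade1 i =>
      rintro g ⟨p, m, rfl⟩
      have hX : RingQuot.mkAlgHom K (GrassRel2 K) (FreeAlgebra.ι K i) = X2 K i := rfl
      rw [hX]
      rcases i with ⟨(_ | _ | iv), hlt⟩
      · rw [show (⟨0, hlt⟩ : Fin 2) = 0 from rfl]
        exact ⟨X 0 * p, X 0 * m, by rw [mul_add, x_mul_L2, ← mul_assoc, x_mul_L2]⟩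
      · rw [show (⟨1, hlt⟩ : Fin 2) = 1 from rfl]
        refine ⟨X 1 * p, pderiv 0 p + X 1 * m, ?_⟩
        rw [mul_add, y_mul_L2, ← mul_assoc, y_mul_L2, add_mul, mul_assoc, zc2_sq, mul_zero,
          add_zero, L2_add, add_mul]
        abel
      · omega
    | mul a b iha ihb =>
      intro g hg
      rw [map_mul, mul_assoc]
      exact iha _ (ihb g hg)
    | add a b iha ihb =>
      intro g hg
      obtain ⟨p1, m1, h1⟩ := iha g hg
      obtain ⟨p2, m2, h2⟩ := ihb g hg
      refine ⟨p1 + p2, m1 + m2, ?_⟩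
      rw [map_add, add_mul, h1, h2, L2_add, L2_add, add_mul]
      abel
  simpa using main w 1 base

lemma phi_rep (p m : MvPolynomial (Fin 2) K) :
    phi K (L2 K p + L2 K m * zc2 K) = ⟨p, -m⟩ := by
  rw [map_add, phi_L2, phi_L2_mul_zc2]
  refine Model.ext' ?_ ?_ <;> simp

lemma phi_inj [CharZero K] {f g : F2 K} (h : phi K f = phi K g) : f = g := by
  obtain ⟨p, m, rfl⟩ := span_all f
  obtain ⟨p', m', rfl⟩ := span_all g
  rw [phi_rep, phi_rep, Model.mk.injEq] at h
  obtain ⟨h1, h2⟩ := h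
  rw [h1, neg_inj.mp h2]

lemma mem_commIdeal_rep [CharZero K] {f : F2 K} (hf : f ∈ commIdeal2 K) :
    ∃ m, f = L2 K m * zc2 K := by
  classical
  set I : TwoSidedIdeal (F2 K) := TwoSidedIdeal.mk' {f : F2 K | (phi K f).fst = 0}
    (by simp)
    (fun {a b} ha hb => by
      simp only [Set.mem_setOf_eq, map_add, Model.add_fst] at *
      rw [ha, hb, add_zero])
    (fun {a} ha => by
      simp only [Set.mem_setOf_eq, map_neg, Model.neg_fst] at *
      rw [ha, neg_zero])
    (fun {a b} hb => by
      simp only [Set.mem_setOf_eq, map_mul, Model.mul_fst] at *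
      rw [hb, mul_zero])
    (fun {a b} ha => by
      simp only [Set.mem_setOf_eq, map_mul, Model.mul_fst] at *
      rw [ha, zero_mul]) with hI
  have hsub : {x : F2 K | ∃ u v : F2 K, x = u * v - v * u} ⊆ (I : Set (F2 K)) := by
    rintro t ⟨u, v, rfl⟩
    have : (phi K (u * v - v * u)).fst = 0 := by
      rw [map_sub, map_mul, map_mul]
      simp [mul_comm]
    simpa [hI, TwoSidedIdeal.mem_mk'] using this
  have hfI : f ∈ I := TwoSidedIdeal.mem_span_iff.mp hf I hsub
  have h0 : (phi K f).fst = 0 := by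
    simpa [hI, TwoSidedIdeal.mem_mk'] using hfI
  obtain ⟨p, m, rfl⟩ := span_all f
  rw [phi_rep] at h0
  simp only at h0
  refine ⟨m, ?_⟩
  rw [h0, L2_zero, zero_add]

end GrassAux
end F4

noncomputable section F5
namespace GrassAux
open MvPolynomial

variable {K : Type*} [Field K]

lemma sigma_X2 (i : Fin 2) : swapAut2 K (X2 K i) = X2 K (Equiv.swap 0 1 i) := by
  rw [show X2 K i = RingQuot.mkAlgHom K (GrassRel2 K) (FreeAlgebra.ι K i) from rfl]
  unfold swapAut2
  rw [RingQuot.liftAlgHom_mkAlgHom_apply, FreeAlgebra.lift_ι_apply]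

lemma sigma_x : swapAut2 K (X2 K 0) = X2 K 1 := by
  rw [sigma_X2, Equiv.swap_apply_left]

lemma sigma_y : swapAut2 K (X2 K 1) = X2 K 0 := by
  rw [sigma_X2, Equiv.swap_apply_right]

lemma sigma_zc2 : swapAut2 K (zc2 K) = zc K := by
  unfold zc2 zc
  rw [map_sub, map_mul, map_mul, sigma_x, sigma_y]

lemma yA [CharZero K] (b : ℕ) (g : F2 K) :
    X2 K 1 * (X2 K 0 ^ b * (zc K * g)) = X2 K 0 ^ b * (X2 K 1 * (zc K * g)) := by
  cases b with
  | zero => rw [pow_zero, one_mul, one_mul]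
  | succ n =>
    rw [← mul_assoc, ← mul_assoc, y_mul_xpow n, add_mul, smul_mul_assoc,
      mul_assoc (X2 K 0 ^ n), zc2_mul_zc, mul_zero, smul_zero, add_zero, mul_assoc, mul_assoc]

lemma swapz [CharZero K] (a b : ℕ) :
    X2 K 1 ^ a * X2 K 0 ^ b * zc K = mono2 K b a * zc K := by
  induction a with
  | zero =>
    rw [pow_zero, one_mul]
    unfold mono2
    rw [pow_zero, mul_one]
  | succ n ih =>
    have h1 : X2 K 1 ^ (n + 1) * X2 K 0 ^ b * zc K =
        X2 K 1 * (X2 K 1 ^ n * X2 K 0 ^ b * zc K) := by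
      rw [pow_succ']
      simp only [mul_assoc]
    rw [h1, ih]
    unfold mono2
    calc X2 K 1 * (X2 K 0 ^ b * X2 K 1 ^ n * zc K)
        = X2 K 1 * (X2 K 0 ^ b * (zc K * X2 K 1 ^ n)) := by
          simp only [mul_assoc]
          rw [← zc_comm (X2 K 1 ^ n)]
      _ = X2 K 0 ^ b * (X2 K 1 * (zc K * X2 K 1 ^ n)) := yA b _
      _ = X2 K 0 ^ b * X2 K 1 ^ (n + 1) * zc K := by
          rw [zc_comm (X2 K 1 ^ n), ← mul_assoc (X2 K 1), ← pow_succ']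
          simp only [mul_assoc]

lemma sigma_L2_mul_zc [CharZero K] (p : MvPolynomial (Fin 2) K) :
    swapAut2 K (L2 K p) * zc K = L2 K (rename (Equiv.swap 0 1) p) * zc K := by
  induction p using MvPolynomial.induction_on' with
  | add p q hp hq => rw [L2_add, map_add, add_mul, hp, hq, map_add, L2_add, add_mul]
  | monomial m c =>
    rw [L2_monomial, map_smul, rename_monomial, L2_monomial]
    unfold mono2
    rw [map_mul, map_pow, map_pow, sigma_x, sigma_y, smul_mul_assoc, smul_mul_assoc, swapz]
    unfold mono2
    have e0 : (Finsupp.mapDomain (Equiv.swap (0 : Fin 2) 1) m) 0 = m 1 := by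
      rw [Finsupp.mapDomain_equiv_apply, Equiv.symm_swap, Equiv.swap_apply_left]
    have e1 : (Finsupp.mapDomain (Equiv.swap (0 : Fin 2) 1) m) 1 = m 0 := by
      rw [Finsupp.mapDomain_equiv_apply, Equiv.symm_swap, Equiv.swap_apply_right]
    rw [e0, e1]

lemma expr_eq [CharZero K] (q : MvPolynomial (Fin 2) K) :
    L2 K q * ((X2 K 1 - X2 K 0) * (X2 K 1 * X2 K 0 - X2 K 0 * X2 K 1)) =
    L2 K ((X 1 - X 0) * q) * zc2 K := by
  have h1 : (X2 K 1 - X2 K 0) * (X2 K 1 * X2 K 0 - X2 K 0 * X2 K 1) =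
      (X2 K 1 - X2 K 0) * zc2 K := rfl
  rw [h1, ← mul_assoc]
  have h2 : L2 K q * (X2 K 1 - X2 K 0) =
      L2 K (X 1 * q) - (L2 K (X 0 * q) - L2 K (pderiv 1 q) * zc K) := by
    rw [mul_sub, L2_mul_y, L2_mul_x]
  rw [h2, sub_mul, sub_mul, mul_assoc (L2 K (pderiv 1 q)), zc_mul_zc2, mul_zero, sub_zero,
    ← sub_mul, ← L2_sub, ← sub_mul]

lemma perm_fin2 : ∀ e : Equiv.Perm (Fin 2), e = 1 ∨ e = Equiv.swap 0 1 := by decide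

lemma isSymm_of_swap {q : MvPolynomial (Fin 2) K}
    (h : rename (Equiv.swap (0 : Fin 2) 1) q = q) : q.IsSymmetric := by
  intro e
  rcases perm_fin2 e with rfl | rfl
  · have h1 : ⇑(1 : Equiv.Perm (Fin 2)) = id := rfl
    rw [h1, rename_id, AlgHom.id_apply]
  · exact h

lemma X_sub_X_ne : (X 1 - X 0 : MvPolynomial (Fin 2) K) ≠ 0 := by
  intro h
  have h2 := congrArg (coeff (Finsupp.single 1 1)) h
  classical
  rw [coeff_sub, coeff_X', coeff_X'] at h2
  simp [Finsupp.single_eq_single_iff] at h2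

lemma antisym_factor [CharZero K] {m : MvPolynomial (Fin 2) K}
    (h : rename (Equiv.swap (0 : Fin 2) 1) m = -m) :
    ∃ q, rename (Equiv.swap (0 : Fin 2) 1) q = q ∧ m = (X 1 - X 0) * q := by
  classical
  set g : Fin 2 → MvPolynomial (Fin 1) K := fun _ => X 0 with hg
  have h1 : aeval g m = 0 := by
    have h2 : aeval g (rename (Equiv.swap (0 : Fin 2) 1) m) = aeval g m := by
      rw [aeval_rename]
      congr 1
    rw [h, map_neg] at h2
    have h4 := congrArg (· + aeval g m) h2
    simp only [neg_add_cancel] at h4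
    have h5 : (2 : MvPolynomial (Fin 1) K) * aeval g m = 0 := by
      rw [two_mul, ← h4]
    rcases mul_eq_zero.mp h5 with h6 | h6
    · exact absurd h6 two_ne_zero
    · exact h6
  have hx0 : (finSuccEquiv K 1) (X 0 : MvPolynomial (Fin 2) K) = Polynomial.X :=
    finSuccEquiv_X_zero
  have hx1 : (finSuccEquiv K 1) (X 1 : MvPolynomial (Fin 2) K) =
      Polynomial.C (X 0 : MvPolynomial (Fin 1) K) := by
    rw [show (1 : Fin 2) = Fin.succ 0 from rfl]
    exact finSuccEquiv_X_succ
  have hAB : ((Polynomial.aeval (X 0 : MvPolynomial (Fin 1) K)).restrictScalars K).comp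
      (finSuccEquiv K 1).toAlgHom = aeval g := by
    apply MvPolynomial.algHom_ext
    intro i
    rcases i with ⟨(_ | _ | iv), hlt⟩
    · rw [show (⟨0, hlt⟩ : Fin 2) = 0 from rfl]
      show Polynomial.aeval (X 0 : MvPolynomial (Fin 1) K)
        ((finSuccEquiv K 1) (X 0 : MvPolynomial (Fin 2) K)) = aeval g (X 0)
      rw [hx0, Polynomial.aeval_X, aeval_X]
    · rw [show (⟨1, hlt⟩ : Fin 2) = 1 from rfl]
      show Polynomial.aeval (X 0 : MvPolynomial (Fin 1) K)
        ((finSuccEquiv K 1) (X 1 : MvPolynomial (Fin 2) K)) = aeval g (X 1)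
      rw [hx1, Polynomial.aeval_C, aeval_X]
      simp [hg]
    · omega
  have hcomp : ∀ p : MvPolynomial (Fin 2) K,
      Polynomial.aeval (X 0 : MvPolynomial (Fin 1) K) ((finSuccEquiv K 1) p) = aeval g p :=
    fun p => DFunLike.congr_fun hAB p
  have hroot : Polynomial.IsRoot ((finSuccEquiv K 1) m) (X 0 : MvPolynomial (Fin 1) K) := by
    have h7 : Polynomial.eval (X 0 : MvPolynomial (Fin 1) K) ((finSuccEquiv K 1) m) =
        Polynomial.aeval (X 0 : MvPolynomial (Fin 1) K) ((finSuccEquiv K 1) m) := by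
      rw [Polynomial.coe_aeval_eq_eval]
    rw [Polynomial.IsRoot, h7, hcomp, h1]
  obtain ⟨c, hc⟩ := Polynomial.dvd_iff_isRoot.mpr hroot
  have hfac : m = (X 0 - X 1) * (finSuccEquiv K 1).symm c := by
    have h8 : (finSuccEquiv K 1) ((X 0 - X 1 : MvPolynomial (Fin 2) K)) =
        Polynomial.X - Polynomial.C (X 0 : MvPolynomial (Fin 1) K) := by
      rw [map_sub, hx0, hx1]
    have h9 : (finSuccEquiv K 1) m =
        (finSuccEquiv K 1) ((X 0 - X 1) * (finSuccEquiv K 1).symm c) := by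
      rw [map_mul, h8, AlgEquiv.apply_symm_apply, hc]
    exact (finSuccEquiv K 1).injective h9
  refine ⟨-((finSuccEquiv K 1).symm c), ?_, ?_⟩
  · -- symmetry of the quotient
    have h10 : rename (Equiv.swap (0 : Fin 2) 1) m =
        (X 1 - X 0) * rename (Equiv.swap (0 : Fin 2) 1) ((finSuccEquiv K 1).symm c) := by
      rw [hfac, map_mul, map_sub, rename_X, rename_X, Equiv.swap_apply_left,
        Equiv.swap_apply_right]
    rw [h, hfac] at h10
    have h11 : (X 1 - X 0 : MvPolynomial (Fin 2) K) * (finSuccEquiv K 1).symm c =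
        (X 1 - X 0) * rename (Equiv.swap (0 : Fin 2) 1) ((finSuccEquiv K 1).symm c) := by
      rw [← h10]; ring
    have h12 := mul_left_cancel₀ X_sub_X_ne h11
    rw [map_neg, ← h12]
  · rw [hfac]; ring

end GrassAux
end F5
open GrassAux in
/-- An element `f` of the commutator ideal `F2'` is fixed by the automorphism exchanging
`x₁` and `x₂` if and only if `f = L(q)·(x₂ − x₁)·[x₂,x₁]` for some symmetric polynomial
`q ∈ K[x₁,x₂]`. -/
theorem symm_commIdeal2_char (K : Type*) [Field K] [CharZero K] :
    ∀ f ∈ commIdeal2 K,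
      (swapAut2 K f = f ↔
        ∃ q : MvPolynomial (Fin 2) K, q.IsSymmetric ∧
          f = L2 K q * ((X2 K 1 - X2 K 0) * (X2 K 1 * X2 K 0 - X2 K 0 * X2 K 1))) := by
  intro f hf
  obtain ⟨m, rfl⟩ := mem_commIdeal_rep hf
  constructor
  · intro hfix
    have h1 : swapAut2 K (L2 K m * zc2 K) =
        L2 K (MvPolynomial.rename (Equiv.swap (0 : Fin 2) 1) m) * zc K := by
      rw [map_mul, sigma_zc2, sigma_L2_mul_zc]
    rw [h1] at hfix
    have h2 := congrArg (phi K) hfix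
    rw [phi_L2_mul_zc, phi_L2_mul_zc2, Model.mk.injEq] at h2
    have h3 : MvPolynomial.rename (Equiv.swap (0 : Fin 2) 1) m = -m := h2.2
    obtain ⟨q, hqs, hq⟩ := antisym_factor h3
    refine ⟨q, isSymm_of_swap hqs, ?_⟩
    rw [expr_eq, ← hq]
  · rintro ⟨q, hqs, hq⟩
    rw [hq, expr_eq]
    have h1 : swapAut2 K (L2 K ((MvPolynomial.X 1 - MvPolynomial.X 0) * q) * zc2 K) =
        L2 K (MvPolynomial.rename (Equiv.swap (0 : Fin 2) 1)
          ((MvPolynomial.X 1 - MvPolynomial.X 0) * q)) * zc K := by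
      rw [map_mul, sigma_zc2, sigma_L2_mul_zc]
    rw [h1]
    have h2 : MvPolynomial.rename (Equiv.swap (0 : Fin 2) 1)
        ((MvPolynomial.X 1 - MvPolynomial.X 0) * q) =
        -((MvPolynomial.X 1 - MvPolynomial.X 0) * q) := by
      rw [map_mul, map_sub, MvPolynomial.rename_X, MvPolynomial.rename_X,
        Equiv.swap_apply_left, Equiv.swap_apply_right, hqs (Equiv.swap 0 1)]
      ring
    rw [h2]
    apply phi_inj
    rw [phi_L2_mul_zc, phi_L2_mul_zc2]
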